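/- Every finite normal-form game has at least one pure coarse-correlated optimin: there exists P̄ ∈ Δ(A) such that no Q ∈ Δ(A) satisfies π_i^{cc,p}(Q) ≥ π_i^{cc,p}(P̄) for every player i with strict inequality for at least one player. -/

import Mathlib

open Finset

variable {I : Type*} [Fintype I] [DecidableEq I] [Nonempty I]
variable {A : I → Type*} [∀ i, Fintype (A i)] [∀ i, DecidableEq (A i)]
  [∀ i, Nonempty (A i)]

/-- The ex ante pure gain of player `j` from the constant deviation to `b`:
`H_j(P; b) = Σ_a P(a) · [u_j(b, a_{-j}) − u_j(a_j, a_{-j})]`. -/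
noncomputable def Hgain (u : I → (∀ i, A i) → ℝ) (P : (∀ i, A i) → ℝ)
    (j : I) (b : A j) : ℝ :=
  ∑ a : ∀ i, A i, P a * (u j (Function.update a j b) - u j a)

/-- `γ` is an admissible profile of rules for the opponents of player `i`:
each `γ j` lies in `C_j^p(P) = {ι_j} ∪ {κ_j^{b_j} : H_j(P; b_j) > 0}`, i.e. it is
either obedience or a constant rule with strictly positive ex ante gain. -/
def CAdmissible (u : I → (∀ i, A i) → ℝ) (P : (∀ i, A i) → ℝ) (i : I)
    (γ : ∀ j, A j → A j) : Prop :=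
  ∀ j, j ≠ i →
    (γ j = id ∨ ∃ b : A j, 0 < Hgain u P j b ∧ γ j = fun _ => b)

/-- The action profile `(a_i, γ_{-i}(a_{-i}))`. -/
def applyDev (i : I) (γ : ∀ j, A j → A j) (a : ∀ j, A j) : ∀ j, A j :=
  fun j => if j = i then a j else γ j (a j)

/-- Pure coarse-correlated optimin performance of player `i`:
`π_i^{cc,p}(P) = min_{γ_{-i} ∈ C_{-i}^p(P)} Σ_a P(a) u_i(a_i, γ_{-i}(a_{-i}))`. -/
noncomputable def ccperf (u : I → (∀ i, A i) → ℝ) (P : (∀ i, A i) → ℝ) (i : I) : ℝ :=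
  sInf {x | ∃ γ : ∀ j, A j → A j, CAdmissible u P i γ ∧
    x = ∑ a : ∀ j, A j, P a * u i (applyDev i γ a)}

section Aux
open Filter Topology

variable (u : I → (∀ i, A i) → ℝ)

/-- The payoff of player `i` under deviation profile `γ`. -/
noncomputable def ccpayoff (i : I) (γ : ∀ j, A j → A j)
    (P : (∀ i, A i) → ℝ) : ℝ :=
  ∑ a : ∀ j, A j, P a * u i (applyDev i γ a)

lemma ccpayoff_continuous (i : I) (γ : ∀ j, A j → A j) :
    Continuous (ccpayoff u i γ) := by
  apply continuous_finset_sum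
  intro a _
  exact (continuous_apply a).mul continuous_const

lemma hgain_continuous (j : I) (b : A j) :
    Continuous fun P : (∀ i, A i) → ℝ => Hgain u P j b := by
  apply continuous_finset_sum
  intro a _
  exact (continuous_apply a).mul continuous_const

/-- The defining set of `ccperf` as an image. -/
lemma ccperf_set_eq (P : (∀ i, A i) → ℝ) (i : I) :
    {x | ∃ γ : ∀ j, A j → A j, CAdmissible u P i γ ∧
      x = ∑ a : ∀ j, A j, P a * u i (applyDev i γ a)}
      = (fun γ => ccpayoff u i γ P) '' {γ | CAdmissible u P i γ} := by
  ext x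
  constructor
  · rintro ⟨γ, hγ, rfl⟩; exact ⟨γ, hγ, rfl⟩
  · rintro ⟨γ, hγ, rfl⟩; exact ⟨γ, hγ, rfl⟩

lemma ccperf_set_finite (P : (∀ i, A i) → ℝ) (i : I) :
    {x | ∃ γ : ∀ j, A j → A j, CAdmissible u P i γ ∧
      x = ∑ a : ∀ j, A j, P a * u i (applyDev i γ a)}.Finite := by
  rw [ccperf_set_eq]
  exact (Set.toFinite _).image _

lemma ccperf_set_nonempty (P : (∀ i, A i) → ℝ) (i : I) :
    {x | ∃ γ : ∀ j, A j → A j, CAdmissible u P i γ ∧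
      x = ∑ a : ∀ j, A j, P a * u i (applyDev i γ a)}.Nonempty :=
  ⟨_, fun _ => id, fun _ _ => Or.inl rfl, rfl⟩

lemma ccperf_le (P : (∀ i, A i) → ℝ) (i : I) {γ : ∀ j, A j → A j}
    (hγ : CAdmissible u P i γ) : ccperf u P i ≤ ccpayoff u i γ P :=
  csInf_le (ccperf_set_finite u P i).bddBelow ⟨γ, hγ, rfl⟩

lemma ccperf_attained (P : (∀ i, A i) → ℝ) (i : I) :
    ∃ γ : ∀ j, A j → A j, CAdmissible u P i γ ∧
      ccperf u P i = ccpayoff u i γ P :=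
  (ccperf_set_nonempty u P i).csInf_mem (ccperf_set_finite u P i)

lemma ccperf_usc (i : I) : UpperSemicontinuous fun P => ccperf u P i := by
  intro P₀ y hy
  obtain ⟨γ₀, hγ₀, hval⟩ := ccperf_attained u P₀ i
  have h1 : ∀ᶠ P in 𝓝 P₀, ccpayoff u i γ₀ P < y := by
    refine ((ccpayoff_continuous u i γ₀).tendsto P₀).eventually_lt_const ?_
    rw [← hval]; exact hy
  have h2 : ∀ᶠ P in 𝓝 P₀, ∀ j : I, ∀ b : A j,
      0 < Hgain u P₀ j b → 0 < Hgain u P j b := by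
    rw [Filter.eventually_all]
    intro j
    rw [Filter.eventually_all]
    intro b
    by_cases h : 0 < Hgain u P₀ j b
    · exact (((hgain_continuous u j b).tendsto P₀).eventually_const_lt h).mono
        fun P hP _ => hP
    · exact Eventually.of_forall fun P h' => absurd h' h
  filter_upwards [h1, h2] with P hP1 hP2
  have hadm : CAdmissible u P i γ₀ := by
    intro j hj
    rcases hγ₀ j hj with h | ⟨b, hb, hbeq⟩
    · exact Or.inl h
    · exact Or.inr ⟨b, hP2 j b hb, hbeq⟩
  exact lt_of_le_of_lt (ccperf_le u P i hadm) hP1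

/-- An upper semicontinuous real function attains its maximum on a nonempty
compact set. -/
lemma usc_exists_max {X : Type*} [TopologicalSpace X] {s : Set X}
    (hs : IsCompact s) (hne : s.Nonempty) {f : X → ℝ}
    (hf : UpperSemicontinuous f) : ∃ x ∈ s, ∀ y ∈ s, f y ≤ f x := by
  by_contra h
  push_neg at h
  have hopen : ∀ y : s, IsOpen (f ⁻¹' Set.Iio (f y.1)) :=
    fun y => upperSemicontinuous_iff_isOpen_preimage.1 hf _
  have hcover : s ⊆ ⋃ y : s, f ⁻¹' Set.Iio (f y.1) := by
    intro x hx
    obtain ⟨y, hy, hlt⟩ := h x hx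
    exact Set.mem_iUnion.2 ⟨⟨y, hy⟩, hlt⟩
  obtain ⟨t, ht⟩ := hs.elim_finite_subcover _ hopen hcover
  have htne : t.Nonempty := by
    obtain ⟨x, hx⟩ := hne
    obtain ⟨y, hy, -⟩ := Set.mem_iUnion₂.1 (ht hx)
    exact ⟨y, hy⟩
  obtain ⟨y₀, hy₀t, hy₀max⟩ := t.exists_max_image (fun y : s => f y.1) htne
  obtain ⟨y₁, hy₁t, hlt⟩ := Set.mem_iUnion₂.1 (ht y₀.2)
  exact absurd (hy₀max y₁ hy₁t) (not_le.2 hlt)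

end Aux

/-- every finite game has a pure coarse-correlated optimin, i.e. a
distribution `P̄ ∈ Δ(A)` that is Pareto undominated with respect to
`(π_1^{cc,p}, …, π_n^{cc,p})`. -/
theorem exists_pure_coarse_correlated_optimin (u : I → (∀ i, A i) → ℝ) :
    ∃ Pbar ∈ stdSimplex ℝ (∀ i, A i),
      ¬ ∃ Q ∈ stdSimplex ℝ (∀ i, A i),
        (∀ i : I, ccperf u Pbar i ≤ ccperf u Q i) ∧
        (∃ i : I, ccperf u Pbar i < ccperf u Q i) := by
  have husc : UpperSemicontinuous fun P : (∀ i, A i) → ℝ =>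
      ∑ i : I, ccperf u P i :=
    upperSemicontinuous_sum fun i _ => ccperf_usc u i
  have hne : (stdSimplex ℝ (∀ i, A i)).Nonempty :=
    ⟨_, ite_eq_mem_stdSimplex ℝ (Classical.arbitrary (∀ i, A i))⟩
  obtain ⟨Pbar, hPbar, hmax⟩ :=
    usc_exists_max (isCompact_stdSimplex ℝ _) hne husc
  refine ⟨Pbar, hPbar, ?_⟩
  rintro ⟨Q, hQ, hle, i₀, hlt⟩
  have : ∑ i : I, ccperf u Pbar i < ∑ i : I, ccperf u Q i :=
    Finset.sum_lt_sum (fun i _ => hle i) ⟨i₀, Finset.mem_univ i₀, hlt⟩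
  exact absurd (hmax Q hQ) (not_le.2 this)
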